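/- arXiv:2002.10303 — 11 statements merged into one kernel-verified Lean document; each statement's English description precedes it below -/
import Mathlib

section
/- Let (L, <) be a linear order and let C be a family of non-empty convex subsets of L with the prefix/suffix property (i.e., whenever I, J ∈ C and I ⊆ J, either every element of I is less than every element of J \ I, or every element of J \ I is less than every element of I). Define I <ⁱ J iff (∃x ∈ I, ∀y ∈ J, x < y) ∨ (∃y ∈ J, ∀x ∈ I, x < y). Then <ⁱ is a strict linear order on C. -/
/-- A set `I` is convex in a linear order. -/
def IsConvexSet {L : Type*} [LinearOrder L] (I : Set L) : Prop :=
  ∀ ⦃x x' y : L⦄, x ∈ I → x' ∈ I → x < y → y < x' → y ∈ I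

/-- A family of sets has the prefix/suffix property. -/
def PrefixSuffixFamily {L : Type*} [LinearOrder L] (C : Set (Set L)) : Prop :=
  ∀ I ∈ C, ∀ J ∈ C, I ⊆ J →
    (∀ x ∈ I, ∀ y ∈ J \ I, x < y) ∨ (∀ y ∈ J \ I, ∀ x ∈ I, y < x)

/-- The order `<ⁱ` on sets. -/
def ltI {L : Type*} [LinearOrder L] (I J : Set L) : Prop :=
  (∃ x ∈ I, ∀ y ∈ J, x < y) ∨ (∃ y ∈ J, ∀ x ∈ I, x < y)

lemma IsConvexSet.mem_of_le_of_le {L : Type*} [LinearOrder L] {J : Set L}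
    (h : IsConvexSet J) {b b' t : L} (hb : b ∈ J) (hb' : b' ∈ J)
    (h1 : b ≤ t) (h2 : t ≤ b') : t ∈ J := by
  rcases h1.eq_or_lt with rfl | h1
  · exact hb
  rcases h2.eq_or_lt with rfl | h2
  · exact hb'
  exact h hb hb' h1 h2

/-- `<ⁱ` is a strict linear order on a prefix/suffix family of non-empty convex sets:
it is irreflexive, transitive, and total (connected) on `C`. -/
theorem ltI_strict_linear_order {L : Type*} [LinearOrder L] (C : Set (Set L))
    (hne : ∀ I ∈ C, (I : Set L).Nonempty)
    (hconv : ∀ I ∈ C, IsConvexSet I)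
    (hps : PrefixSuffixFamily C) :
    (∀ I ∈ C, ¬ ltI I I) ∧
    (∀ I ∈ C, ∀ J ∈ C, ∀ K ∈ C, ltI I J → ltI J K → ltI I K) ∧
    (∀ I ∈ C, ∀ J ∈ C, I ≠ J → ltI I J ∨ ltI J I) := by
  refine ⟨?_, ?_, ?_⟩
  · -- irreflexivity
    rintro I hI (⟨x, hx, h⟩ | ⟨y, hy, h⟩)
    · exact lt_irrefl x (h x hx)
    · exact lt_irrefl y (h y hy)
  · -- transitivity
    rintro I hI J hJ K hK (⟨x, hxI, hx⟩ | ⟨y, hyJ, hy⟩) (⟨x', hx'J, hx'⟩ | ⟨z, hzK, hz⟩)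
    · -- x ∈ I below all J; x' ∈ J below all K
      exact Or.inl ⟨x, hxI, fun w hw => (hx x' hx'J).trans (hx' w hw)⟩
    · -- x ∈ I below all J; z ∈ K above all J
      by_contra hc
      rw [ltI] at hc
      push_neg at hc
      obtain ⟨h1, h2⟩ := hc
      obtain ⟨y₀, hy₀⟩ := hne J hJ
      obtain ⟨a, haI, hza⟩ := h2 z hzK
      have hJI : J ⊆ I := fun w hw =>
        hconv I hI hxI haI (hx w hw) (lt_of_lt_of_le (hz w hw) hza)
      rcases hps J hJ I hI hJI with hpre | hsuf
      · have hxnJ : x ∉ J := fun h => lt_irrefl x (hx x h)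
        exact absurd (hx y₀ hy₀) (not_lt.2 (hpre y₀ hy₀ x ⟨hxI, hxnJ⟩).le)
      · have haJ : a ∈ J := by
          by_contra haJ
          exact absurd ((hz y₀ hy₀).trans_le hza) (not_lt.2 (hsuf a ⟨haI, haJ⟩ y₀ hy₀).le)
        exact absurd (hz a haJ) (not_lt.2 hza)
    · -- y ∈ J above all I; x' ∈ J below all K
      by_contra hc
      rw [ltI] at hc
      push_neg at hc
      obtain ⟨h1, h2⟩ := hc
      obtain ⟨a₀, ha₀⟩ := hne I hI
      have hIJ : I ⊆ J := by
        intro a ha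
        rcases le_or_gt a x' with h | h
        · obtain ⟨c, hcK, hca⟩ := h1 a ha
          exact absurd (hx' c hcK) (not_lt.2 (hca.trans h))
        · exact hconv J hJ hx'J hyJ h (hy a ha)
      have hKJ : K ⊆ J := by
        intro c hc
        obtain ⟨a, haI, hca⟩ := h2 c hc
        exact hconv J hJ hx'J hyJ (hx' c hc) (hca.trans_lt (hy a haI))
      have hynI : y ∉ I := fun h => lt_irrefl y (hy y h)
      have hx'nK : x' ∉ K := fun h => lt_irrefl x' (hx' x' h)
      have hIpre : ∀ a ∈ I, ∀ w ∈ J \ I, a < w := by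
        rcases hps I hI J hJ hIJ with h | h
        · exact h
        · exact absurd (hy a₀ ha₀) (not_lt.2 (h y ⟨hyJ, hynI⟩ a₀ ha₀).le)
      have hKsuf : ∀ w ∈ J \ K, ∀ c ∈ K, w < c := by
        rcases hps K hK J hJ hKJ with h | h
        · obtain ⟨c₀, hc₀⟩ := hne K hK
          exact absurd (hx' c₀ hc₀) (not_lt.2 (h c₀ hc₀ x' ⟨hx'J, hx'nK⟩).le)
        · exact h
      have hIK : I ⊆ K := by
        intro a ha
        by_contra hanK
        obtain ⟨c, hcK, hca⟩ := h1 a ha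
        exact absurd (hKsuf a ⟨hIJ ha, hanK⟩ c hcK) (not_lt.2 hca)
      by_cases hKI : K ⊆ I
      · exact absurd (hx' a₀ (hKI.antisymm hIK ▸ ha₀ : a₀ ∈ K))
          (not_lt.2 (hIpre a₀ ha₀ x' ⟨hx'J, fun h => hx'nK (hIK h)⟩).le)
      · obtain ⟨w, hwK, hwnI⟩ := Set.not_subset.1 hKI
        rcases hps I hI K hK hIK with h | h
        · obtain ⟨a, haI, hwa⟩ := h2 w hwK
          exact absurd (h a haI w ⟨hwK, hwnI⟩) (not_lt.2 hwa)
        · have hyK : y ∈ K := by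
            by_contra hynK
            exact absurd (hy a₀ ha₀) (not_lt.2 (hKsuf y ⟨hyJ, hynK⟩ a₀ (hIK ha₀)).le)
          exact absurd (hy a₀ ha₀) (not_lt.2 (h y ⟨hyK, hynI⟩ a₀ ha₀).le)
    · -- y ∈ J above all I; z ∈ K above all J
      exact Or.inr ⟨z, hzK, fun a ha => (hy a ha).trans (hz y hyJ)⟩
  · -- totality
    intro I hI J hJ hne'
    by_contra hc
    push_neg at hc
    obtain ⟨h1, h2⟩ := hc
    rw [ltI] at h1 h2
    push_neg at h1 h2
    obtain ⟨h1a, h1b⟩ := h1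
    obtain ⟨h2a, h2b⟩ := h2
    apply hne'
    ext t
    constructor
    · intro ht
      obtain ⟨b, hbJ, hbt⟩ := h1a t ht
      obtain ⟨b', hb'J, htb'⟩ := h2b t ht
      exact (hconv J hJ).mem_of_le_of_le hbJ hb'J hbt htb'
    · intro ht
      obtain ⟨b, hbI, hbt⟩ := h2a t ht
      obtain ⟨b', hb'I, htb'⟩ := h1b t ht
      exact (hconv I hI).mem_of_le_of_le hbI hb'I hbt htb'
end

section
/- Let (L, <) be a finite linear order of cardinality n ≥ 1, and let C be a family of non-empty convex subsets of L with the prefix/suffix property. Then |C| ≤ 2n − 1. -/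
/-- On a finite linear order of cardinality `n ≥ 1`, any prefix/suffix family of
non-empty convex sets has at most `2n - 1` members. -/
theorem card_prefixSuffixFamily_le {L : Type*} [Fintype L] [LinearOrder L]
    (hn : 1 ≤ Fintype.card L)
    (C : Set (Set L))
    (hne : ∀ I ∈ C, (I : Set L).Nonempty)
    (hconv : ∀ I ∈ C, IsConvexSet I)
    (hps : PrefixSuffixFamily C) :
    C.ncard ≤ 2 * Fintype.card L - 1 := by
  classical
  set n := Fintype.card L with hncard
  have hfin : ∀ I ∈ C, I.toFinset.Nonempty := fun I hI =>
    Set.toFinset_nonempty.mpr (hne I hI)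
  set d : Set L → ℤ := fun I =>
    if h : I.toFinset.Nonempty then
      ((Finset.univ.filter (fun x => x < I.toFinset.min' h)).card : ℤ)
        - ((Finset.univ.filter (fun x => I.toFinset.max' h < x)).card : ℤ)
    else 0 with hd
  -- membership characterization
  have hmem : ∀ I, I ∈ C → ∀ (h : I.toFinset.Nonempty) (x : L),
      x ∈ I ↔ I.toFinset.min' h ≤ x ∧ x ≤ I.toFinset.max' h := by
    intro I hI h x
    constructor
    · intro hx
      have hx' : x ∈ I.toFinset := Set.mem_toFinset.mpr hx
      exact ⟨Finset.min'_le _ _ hx', Finset.le_max' _ _ hx'⟩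
    · rintro ⟨h1, h2⟩
      have hmin : I.toFinset.min' h ∈ I := Set.mem_toFinset.mp (Finset.min'_mem _ _)
      have hmax : I.toFinset.max' h ∈ I := Set.mem_toFinset.mp (Finset.max'_mem _ _)
      rcases eq_or_lt_of_le h1 with h1' | h1'
      · rwa [← h1']
      rcases eq_or_lt_of_le h2 with h2' | h2'
      · rwa [h2']
      exact hconv I hI hmin hmax h1' h2'
  -- no strict nesting
  have hnest : ∀ I, (hI : I ∈ C) → ∀ J, (hJ : J ∈ C) →
      J.toFinset.min' (hfin J hJ) < I.toFinset.min' (hfin I hI) →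
      I.toFinset.max' (hfin I hI) < J.toFinset.max' (hfin J hJ) → False := by
    intro I hI J hJ h1 h2
    have hsub : I ⊆ J := by
      intro y hy
      have hy' := (hmem I hI (hfin I hI) y).mp hy
      exact (hmem J hJ (hfin J hJ) y).mpr
        ⟨le_of_lt (lt_of_lt_of_le h1 hy'.1), le_of_lt (lt_of_le_of_lt hy'.2 h2)⟩
    have hminJ : J.toFinset.min' (hfin J hJ) ∈ J := Set.mem_toFinset.mp (Finset.min'_mem _ _)
    have hmaxJ : J.toFinset.max' (hfin J hJ) ∈ J := Set.mem_toFinset.mp (Finset.max'_mem _ _)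
    have hminI : I.toFinset.min' (hfin I hI) ∈ I := Set.mem_toFinset.mp (Finset.min'_mem _ _)
    have hmaxI : I.toFinset.max' (hfin I hI) ∈ I := Set.mem_toFinset.mp (Finset.max'_mem _ _)
    have hminJnotI : J.toFinset.min' (hfin J hJ) ∉ I := by
      intro hmem'
      exact absurd (Finset.min'_le _ _ (Set.mem_toFinset.mpr hmem')) (not_le.mpr h1)
    have hmaxJnotI : J.toFinset.max' (hfin J hJ) ∉ I := by
      intro hmem'
      exact absurd (Finset.le_max' _ _ (Set.mem_toFinset.mpr hmem')) (not_le.mpr h2)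
    rcases hps I hI J hJ hsub with hp | hp
    · exact absurd (hp _ hminI _ ⟨hminJ, hminJnotI⟩) (not_lt.mpr h1.le)
    · exact absurd (hp _ ⟨hmaxJ, hmaxJnotI⟩ _ hmaxI) (not_lt.mpr h2.le)
  -- strict monotonicity of the two counting functions
  have hmono_l : ∀ a a' : L, a < a' →
      (Finset.univ.filter (fun x => x < a)).card
        < (Finset.univ.filter (fun x => x < a')).card := by
    intro a a' h
    apply Finset.card_lt_card
    rw [Finset.ssubset_iff_of_subset]
    · exact ⟨a, by simp [h], by simp⟩
    · intro x hx
      simp only [Finset.mem_filter, Finset.mem_univ, true_and] at hx ⊢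
      exact hx.trans h
  have hmono_r : ∀ b b' : L, b < b' →
      (Finset.univ.filter (fun x => b' < x)).card
        < (Finset.univ.filter (fun x => b < x)).card := by
    intro b b' h
    apply Finset.card_lt_card
    rw [Finset.ssubset_iff_of_subset]
    · exact ⟨b', by simp [h], by simp⟩
    · intro x hx
      simp only [Finset.mem_filter, Finset.mem_univ, true_and] at hx ⊢
      exact h.trans hx
  -- bounds
  have hbound_l : ∀ a : L, (Finset.univ.filter (fun x => x < a)).card < n := by
    intro a
    have hss : (Finset.univ.filter (fun x => x < a)) ⊂ Finset.univ := by
      rw [Finset.ssubset_iff_of_subset (Finset.subset_univ _)]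
      exact ⟨a, Finset.mem_univ a, by simp⟩
    have := Finset.card_lt_card hss
    rwa [Finset.card_univ, ← hncard] at this
  have hbound_r : ∀ a : L, (Finset.univ.filter (fun x => a < x)).card < n := by
    intro a
    have hss : (Finset.univ.filter (fun x => a < x)) ⊂ Finset.univ := by
      rw [Finset.ssubset_iff_of_subset (Finset.subset_univ _)]
      exact ⟨a, Finset.mem_univ a, by simp⟩
    have := Finset.card_lt_card hss
    rwa [Finset.card_univ, ← hncard] at this
  -- injectivity on C
  have hinj : Set.InjOn d C := by
    intro I hI J hJ hdeq
    have hIf := hfin I hI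
    have hJf := hfin J hJ
    rw [hd] at hdeq
    simp only [dif_pos hIf, dif_pos hJf] at hdeq
    rcases lt_trichotomy (I.toFinset.min' hIf) (J.toFinset.min' hJf) with hlt | heq | hlt
    · have h1 := hmono_l _ _ hlt
      have h2 : (Finset.univ.filter (fun x => I.toFinset.max' hIf < x)).card
          < (Finset.univ.filter (fun x => J.toFinset.max' hJf < x)).card := by omega
      have h3 : J.toFinset.max' hJf < I.toFinset.max' hIf := by
        by_contra hcon
        push_neg at hcon
        rcases eq_or_lt_of_le hcon with he | hl
        · rw [he] at h2; exact lt_irrefl _ h2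
        · have := hmono_r _ _ hl; omega
      exact absurd (hnest J hJ I hI hlt h3) (fun h => h)
    · have hl_eq : (Finset.univ.filter (fun x => x < I.toFinset.min' hIf)).card
          = (Finset.univ.filter (fun x => x < J.toFinset.min' hJf)).card := by rw [heq]
      have hmax : I.toFinset.max' hIf = J.toFinset.max' hJf := by
        rcases lt_trichotomy (I.toFinset.max' hIf) (J.toFinset.max' hJf) with h | h | h
        · have := hmono_r _ _ h; omega
        · exact h
        · have := hmono_r _ _ h; omega
      ext x
      rw [hmem I hI hIf x, hmem J hJ hJf x, heq, hmax]
    · have h1 := hmono_l _ _ hlt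
      have h2 : (Finset.univ.filter (fun x => J.toFinset.max' hJf < x)).card
          < (Finset.univ.filter (fun x => I.toFinset.max' hIf < x)).card := by omega
      have h3 : I.toFinset.max' hIf < J.toFinset.max' hJf := by
        by_contra hcon
        push_neg at hcon
        rcases eq_or_lt_of_le hcon with he | hl
        · rw [he] at h2; exact lt_irrefl _ h2
        · have := hmono_r _ _ hl; omega
      exact absurd (hnest I hI J hJ hlt h3) (fun h => h)
  -- maps into a small interval
  have hmaps : ∀ I ∈ C, d I ∈ Set.Icc (-(n : ℤ) + 1) ((n : ℤ) - 1) := by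
    intro I hI
    have hIf := hfin I hI
    rw [hd]
    simp only [dif_pos hIf]
    have h1 := hbound_l (I.toFinset.min' hIf)
    have h2 := hbound_r (I.toFinset.max' hIf)
    rw [Set.mem_Icc]
    omega
  have hfinIcc : (Set.Icc (-(n : ℤ) + 1) ((n : ℤ) - 1)).Finite := Set.finite_Icc _ _
  have hle := Set.ncard_le_ncard_of_injOn d hmaps hinj hfinIcc
  have hIcc : (Set.Icc (-(n : ℤ) + 1) ((n : ℤ) - 1)).ncard = 2 * n - 1 := by
    rw [← Finset.coe_Icc, Set.ncard_coe_finset, Int.card_Icc]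
    omega
  rw [hIcc] at hle
  exact hle
end

section
/- Let (L, <) be a finite linear order and let C be a family of non-empty convex subsets with the prefix/suffix property. Then for I, J ∈ C, I <ⁱ J holds if and only if min(I) + max(I) < min(J) + max(J), where elements are identified with their rank in a bijection of L with {1, …, n}. -/
/-- On a finite linear order (identified with `Fin n` via ranks), for members `I, J` of a
prefix/suffix family of non-empty convex sets, `I <ⁱ J` iff `min I + max I < min J + max J`. -/
theorem ltI_iff_min_add_max {n : ℕ} (C : Set (Set (Fin n)))
    (hne : ∀ I ∈ C, (I : Set (Fin n)).Nonempty)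
    (hconv : ∀ I ∈ C, IsConvexSet I)
    (hps : PrefixSuffixFamily C)
    (I J : Set (Fin n)) (hI : I ∈ C) (hJ : J ∈ C)
    (mI MI mJ MJ : Fin n)
    (hmI : IsLeast I mI) (hMI : IsGreatest I MI)
    (hmJ : IsLeast J mJ) (hMJ : IsGreatest J MJ) :
    ltI I J ↔ (mI : ℕ) + (MI : ℕ) < (mJ : ℕ) + (MJ : ℕ) := by
  have key : ltI I J ↔ (mI < mJ ∨ MI < MJ) := by
    constructor
    · rintro (⟨x, hx, h⟩ | ⟨y, hy, h⟩)
      · exact Or.inl ((hmI.2 hx).trans_lt (h mJ hmJ.1))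
      · exact Or.inr ((h MI hMI.1).trans_le (hMJ.2 hy))
    · rintro (h | h)
      · exact Or.inl ⟨mI, hmI.1, fun y hy => h.trans_le (hmJ.2 hy)⟩
      · exact Or.inr ⟨MJ, hMJ.1, fun x hx => (hMI.2 hx).trans_lt h⟩
  rw [key]
  constructor
  · rintro (h | h)
    · rcases le_or_gt MI MJ with h2 | h2
      · have h' : (mI : ℕ) < mJ := h
        have h2' : (MI : ℕ) ≤ MJ := h2
        omega
      · exfalso
        have hsub : J ⊆ I := fun y hy =>
          hconv I hI hmI.1 hMI.1 (h.trans_le (hmJ.2 hy)) ((hMJ.2 hy).trans_lt h2)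
        have hmIJ : mI ∉ J := fun hmem => absurd (hmJ.2 hmem) (not_le.2 h)
        have hMIJ : MI ∉ J := fun hmem => absurd (hMJ.2 hmem) (not_le.2 h2)
        rcases hps J hJ I hI hsub with hA | hB
        · exact absurd (hA mJ hmJ.1 mI ⟨hmI.1, hmIJ⟩) (not_lt.2 h.le)
        · exact absurd (hB MI ⟨hMI.1, hMIJ⟩ MJ hMJ.1) (not_lt.2 h2.le)
    · rcases le_or_gt mI mJ with h2 | h2
      · have h' : (MI : ℕ) < MJ := h
        have h2' : (mI : ℕ) ≤ mJ := h2
        omega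
      · exfalso
        have hsub : I ⊆ J := fun x hx =>
          hconv J hJ hmJ.1 hMJ.1 (h2.trans_le (hmI.2 hx)) ((hMI.2 hx).trans_lt h)
        have hmJI : mJ ∉ I := fun hmem => absurd (hmI.2 hmem) (not_le.2 h2)
        have hMJI : MJ ∉ I := fun hmem => absurd (hMI.2 hmem) (not_le.2 h)
        rcases hps I hI J hJ hsub with hA | hB
        · exact absurd (hA mI hmI.1 mJ ⟨hmJ.1, hmJI⟩) (not_lt.2 h2.le)
        · exact absurd (hB MJ ⟨hMJ.1, hMJI⟩ MI hMI.1) (not_lt.2 h.le)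
  · intro h
    by_contra hc
    push_neg at hc
    obtain ⟨h1, h2⟩ := hc
    have h1' : (mJ : ℕ) ≤ mI := h1
    have h2' : (MJ : ℕ) ≤ MI := h2
    omega
end

section
/- In a Wheeler NFA A, for every state u, the set I_u = {α ∈ Pref(L(A)) : u ∈ δ(s, α)} is a convex subset of (Pref(L(A)), ≺), where ≺ is the co-lexicographic order. -/
/-- The co-lexicographic (strict) order on strings. -/
def StrColex {α : Type*} [LinearOrder α] (x y : List α) : Prop :=
  List.Lex (· < ·) x.reverse y.reverse

/-- A Wheeler NFA: an NFA with a linear order on states whose minimum is the initial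
state `s`, `s` has no incoming edges, and the two Wheeler properties hold. -/
structure WNFA (α Q : Type*) [LinearOrder α] [LinearOrder Q] where
  δ : Q → α → Set Q
  s : Q
  F : Set Q
  s_min : ∀ q : Q, s ≤ q
  s_no_incoming : ∀ (u : Q) (a : α), s ∉ δ u a
  wheeler_i : ∀ ⦃u₁ u₂ : Q⦄ ⦃a₁ a₂ : α⦄ ⦃v₁ v₂ : Q⦄,
    v₁ ∈ δ u₁ a₁ → v₂ ∈ δ u₂ a₂ → a₁ < a₂ → v₁ < v₂
  wheeler_ii : ∀ ⦃u₁ u₂ : Q⦄ ⦃a : α⦄ ⦃v₁ v₂ : Q⦄,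
    v₁ ∈ δ u₁ a → v₂ ∈ δ u₂ a → u₁ < u₂ → v₁ ≤ v₂

namespace WNFA

variable {α Q : Type*} [LinearOrder α] [LinearOrder Q]

/-- The transition function extended to strings. -/
def δStar (A : WNFA α Q) : Q → List α → Set Q
  | q, [] => {q}
  | q, a :: w => {p | ∃ v ∈ A.δ q a, p ∈ A.δStar v w}

/-- The language accepted by the automaton. -/
def lang (A : WNFA α Q) : Set (List α) := {w | ∃ q ∈ A.F, q ∈ A.δStar A.s w}

/-- The set of prefixes of accepted words: the strings the automaton can read. -/
def Pref (A : WNFA α Q) : Set (List α) := {x | ∃ y, x ++ y ∈ A.lang}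

/-- `I_u`: the set of readable strings reaching state `u` from the initial state. -/
def Iu (A : WNFA α Q) (u : Q) : Set (List α) := {x | x ∈ A.Pref ∧ u ∈ A.δStar A.s x}

end WNFA

namespace WNFA

variable {α Q : Type*} [LinearOrder α] [LinearOrder Q]

lemma δStar_append_mem (A : WNFA α Q) (q : Q) (x w : List α) (p : Q) :
    p ∈ A.δStar q (x ++ w) ↔ ∃ r ∈ A.δStar q x, p ∈ A.δStar r w := by
  induction x generalizing q with
  | nil => simp [δStar]
  | cons a x ih =>
    simp only [List.cons_append, δStar, Set.mem_setOf_eq]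
    constructor
    · rintro ⟨v, hv, hp⟩
      rcases (ih v).mp hp with ⟨r, hr, hp⟩
      exact ⟨r, ⟨v, hv, hr⟩, hp⟩
    · rintro ⟨r, ⟨v, hv, hr⟩, hp⟩
      exact ⟨v, hv, (ih v).mpr ⟨r, hr, hp⟩⟩

lemma δStar_snoc_mem (A : WNFA α Q) (q : Q) (x : List α) (a : α) (p : Q) :
    p ∈ A.δStar q (x ++ [a]) ↔ ∃ r ∈ A.δStar q x, p ∈ A.δ r a := by
  rw [δStar_append_mem]
  simp [δStar]

/-- Crossing lemma: if `x ≺ y` but a state read by `y` is smaller than a state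
read by `x`, then both states are read by both strings. -/
lemma key (A : WNFA α Q) (x y : List α) (p q : Q)
    (hxy : StrColex x y) (hp : p ∈ A.δStar A.s x) (hq : q ∈ A.δStar A.s y)
    (hlt : q < p) : p ∈ A.δStar A.s y ∧ q ∈ A.δStar A.s x := by
  rcases x.eq_nil_or_concat with rfl | ⟨x', a, hxe⟩
  · -- x = [], so p = s, contradicting q < p ≤ q
    simp only [δStar, Set.mem_singleton_iff] at hp
    exact absurd (hp ▸ A.s_min q) (not_le.mpr hlt)
  rcases y.eq_nil_or_concat with rfl | ⟨y', b, hye⟩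
  · -- y = [] can't be strictly greater than anything
    unfold StrColex at hxy
    simp only [List.reverse_nil] at hxy
    exact (List.not_lex_nil hxy).elim
  subst hxe hye
  simp only [List.concat_eq_append] at *
  rcases (A.δStar_snoc_mem _ _ _ _).mp hp with ⟨p', hp', hpa⟩
  rcases (A.δStar_snoc_mem _ _ _ _).mp hq with ⟨q', hq', hqb⟩
  unfold StrColex at hxy
  rw [List.reverse_append, List.reverse_append] at hxy
  simp only [List.reverse_singleton, List.singleton_append] at hxy
  cases hxy with
  | rel hab =>
    exact absurd (A.wheeler_i hpa hqb hab) (not_lt.mpr hlt.le)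
  | cons hxy' =>
    -- same last letter
    have hq'p' : q' ≤ p' := by
      by_contra h
      exact absurd (A.wheeler_ii hpa hqb (not_le.mp h)) (not_le.mpr hlt)
    rcases eq_or_lt_of_le hq'p' with rfl | hq'p'
    · exact ⟨(A.δStar_snoc_mem _ _ _ _).mpr ⟨q', hq', hpa⟩,
        (A.δStar_snoc_mem _ _ _ _).mpr ⟨q', hp', hqb⟩⟩
    · have ih := A.key x' y' p' q' hxy' hp' hq' hq'p'
      exact ⟨(A.δStar_snoc_mem _ _ _ _).mpr ⟨p', ih.1, hpa⟩,
        (A.δStar_snoc_mem _ _ _ _).mpr ⟨q', ih.2, hqb⟩⟩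
termination_by x.length
decreasing_by subst hxe; simp

end WNFA

/-- In a Wheeler NFA, for each state `u` the set `I_u` is convex in
`(Pref(L(A)), ≺)` with `≺` the co-lexicographic order. -/
theorem Iu_convex {α Q : Type*} [LinearOrder α] [LinearOrder Q]
    (A : WNFA α Q) (u : Q) (x y z : List α)
    (hx : x ∈ A.Iu u) (hz : z ∈ A.Iu u) (hy : y ∈ A.Pref)
    (hxy : StrColex x y) (hyz : StrColex y z) :
    y ∈ A.Iu u := by
  obtain ⟨hxP, hxu⟩ := hx
  obtain ⟨hzP, hzu⟩ := hz
  -- y is readable: get some state v reached by y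
  obtain ⟨w, qf, _, hqf⟩ := id hy
  obtain ⟨v, hv, -⟩ := (A.δStar_append_mem _ _ _ _).mp hqf
  refine ⟨hy, ?_⟩
  rcases lt_trichotomy v u with h | rfl | h
  · exact (A.key x y u v hxy hxu hv h).1
  · exact hv
  · exact (A.key y z v u hyz hv hzu h).2
end

section
/- Let A be a Wheeler NFA, u, v states, and α, β ∈ Pref(L(A)) with α ∈ I_u, β ∈ I_v, and not both α, β belonging to I_u ∩ I_v. Then α ≺ β if and only if u < v. -/
namespace WNFA

variable {α Q : Type*} [LinearOrder α] [LinearOrder Q]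

lemma δStar_snoc (A : WNFA α Q) (q : Q) (l : List α) (a : α) (p : Q) :
    p ∈ A.δStar q (l ++ [a]) ↔ ∃ w ∈ A.δStar q l, p ∈ A.δ w a := by
  induction l generalizing q with
  | nil =>
    simp [δStar]
  | cons b l ih =>
    constructor
    · rintro ⟨w, hw, hp⟩
      rcases (ih w).1 hp with ⟨w', hw', hp'⟩
      exact ⟨w', ⟨w, hw, hw'⟩, hp'⟩
    · rintro ⟨w', ⟨w, hw, hw'⟩, hp'⟩
      exact ⟨w, hw, (ih w).2 ⟨w', hw', hp'⟩⟩

lemma key_s10 (A : WNFA α Q) :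
    ∀ {xr yr : List α} {u v : Q}, List.Lex (· < ·) xr yr →
      u ∈ A.δStar A.s xr.reverse → v ∈ A.δStar A.s yr.reverse → v < u →
      v ∈ A.δStar A.s xr.reverse ∧ u ∈ A.δStar A.s yr.reverse := by
  intro xr yr u v hlex
  induction hlex generalizing u v with
  | nil =>
    intro hu _ hvu
    simp only [List.reverse_nil, δStar, Set.mem_singleton_iff] at hu
    exact absurd (hu ▸ A.s_min v) (not_le.2 hvu)
  | @rel a b l₁ l₂ hab =>
    intro hu hv hvu
    simp only [List.reverse_cons] at hu hv
    rcases (A.δStar_snoc _ _ _ _).1 hu with ⟨w, _, hu'⟩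
    rcases (A.δStar_snoc _ _ _ _).1 hv with ⟨w', _, hv'⟩
    exact absurd (A.wheeler_i hu' hv' hab) (not_lt.2 hvu.le)
  | @cons a l₁ l₂ _ ih =>
    intro hu hv hvu
    simp only [List.reverse_cons] at hu hv ⊢
    rcases (A.δStar_snoc _ _ _ _).1 hu with ⟨w, hw, hu'⟩
    rcases (A.δStar_snoc _ _ _ _).1 hv with ⟨w', hw', hv'⟩
    rcases lt_trichotomy w w' with h | h | h
    · exact absurd (A.wheeler_ii hu' hv' h) (not_le.2 hvu)
    · subst h
      exact ⟨(A.δStar_snoc _ _ _ _).2 ⟨w, hw, hv'⟩,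
        (A.δStar_snoc _ _ _ _).2 ⟨w, hw', hu'⟩⟩
    · obtain ⟨h1, h2⟩ := ih hw hw' h
      exact ⟨(A.δStar_snoc _ _ _ _).2 ⟨w', h1, hv'⟩,
        (A.δStar_snoc _ _ _ _).2 ⟨w, h2, hu'⟩⟩

lemma key' (A : WNFA α Q) {x y : List α} {u v : Q} (h : StrColex x y)
    (hu : u ∈ A.δStar A.s x) (hv : v ∈ A.δStar A.s y) (hvu : v < u) :
    v ∈ A.δStar A.s x ∧ u ∈ A.δStar A.s y := by
  have := A.key_s10 (xr := x.reverse) (yr := y.reverse) h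
    (by simpa using hu) (by simpa using hv) hvu
  simpa using this

end WNFA

/-- In a Wheeler NFA, if `x ∈ I_u`, `y ∈ I_v` and not both `x, y` lie in `I_u ∩ I_v`,
then `x ≺ y` iff `u < v`. -/
theorem colex_iff_lt_of_Iu {α Q : Type*} [LinearOrder α] [LinearOrder Q]
    (A : WNFA α Q) (u v : Q) (x y : List α)
    (hx : x ∈ A.Iu u) (hy : y ∈ A.Iu v)
    (hnb : ¬ (x ∈ A.Iu u ∩ A.Iu v ∧ y ∈ A.Iu u ∩ A.Iu v)) :
    StrColex x y ↔ u < v := by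
  constructor
  · intro hlex
    rcases lt_trichotomy u v with h | h | h
    · exact h
    · subst h; exact absurd ⟨⟨hx, hx⟩, ⟨hy, hy⟩⟩ hnb
    · obtain ⟨h1, h2⟩ := A.key' hlex hx.2 hy.2 h
      exact absurd ⟨⟨hx, ⟨hx.1, h1⟩⟩, ⟨⟨hy.1, h2⟩, hy⟩⟩ hnb
  · intro huv
    rcases trichotomous_of (List.Lex (· < · : α → α → Prop))
      x.reverse y.reverse with h | h | h
    · exact h
    · have hxy : x = y := List.reverse_injective h
      subst hxy
      exact absurd ⟨⟨hx, hy⟩, ⟨hx, hy⟩⟩ hnb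
    · obtain ⟨h1, h2⟩ := A.key' h hy.2 hx.2 huv
      exact absurd ⟨⟨hx, ⟨hx.1, h2⟩⟩, ⟨⟨hy.1, h1⟩, hy⟩⟩ hnb
end

section
/- Let A be a Wheeler DFA. For all α, β ∈ Pref(L(A)): if α ≺ β then δ(s, α) ≤ δ(s, β), and if δ(s, α) < δ(s, β) then α ≺ β. Consequently, for any monotone (weakly increasing or weakly decreasing) sequence (αᵢ) in (Pref(L(A)), ≺), the sequence of states δ(s, αᵢ) is eventually constant. -/
namespace WNFA

variable {α Q : Type*} [LinearOrder α] [LinearOrder Q]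

lemma mem_δStar_append (A : WNFA α Q) (x y : List α) (q p : Q) :
    p ∈ A.δStar q (x ++ y) ↔ ∃ r ∈ A.δStar q x, p ∈ A.δStar r y := by
  induction x generalizing q with
  | nil => simp [δStar]
  | cons a w ih =>
    simp only [List.cons_append, δStar, Set.mem_setOf_eq]
    constructor
    · rintro ⟨v, hv, hp⟩
      obtain ⟨r, hr, hp⟩ := (ih v).mp hp
      exact ⟨r, ⟨v, hv, hr⟩, hp⟩
    · rintro ⟨r, ⟨v, hv, hr⟩, hp⟩
      exact ⟨v, hv, (ih v).mpr ⟨r, hr, hp⟩⟩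

lemma mem_δStar_snoc (A : WNFA α Q) (x : List α) (a : α) (q p : Q) :
    p ∈ A.δStar q (x ++ [a]) ↔ ∃ r ∈ A.δStar q x, p ∈ A.δ r a := by
  rw [mem_δStar_append]
  simp [δStar]

lemma δStar_subsingleton (A : WNFA α Q) (hdet : ∀ (q : Q) (a : α), (A.δ q a).Subsingleton) :
    ∀ (x : List α) (q : Q), (A.δStar q x).Subsingleton := by
  intro x
  induction x with
  | nil => intro q p hp r hr; simp [δStar] at hp hr; rw [hp, hr]
  | cons a w ih =>
    rintro q p ⟨v, hv, hp⟩ r ⟨v', hv', hr⟩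
    cases hdet q a hv hv'
    exact ih v hp hr

lemma pref_nonempty (A : WNFA α Q) {x : List α} (hx : x ∈ A.Pref) :
    (A.δStar A.s x).Nonempty := by
  obtain ⟨y, q, _, hq⟩ := hx
  obtain ⟨r, hr, -⟩ := (A.mem_δStar_append x y A.s q).mp hq
  exact ⟨r, hr⟩

/-- Key Wheeler monotonicity lemma, stated on reversed strings. -/
lemma wheeler_key (A : WNFA α Q) (hdet : ∀ (q : Q) (a : α), (A.δ q a).Subsingleton)
    {rx ry : List α} (h : List.Lex (· < ·) rx ry) :
    ∀ u v : Q, u ∈ A.δStar A.s rx.reverse → v ∈ A.δStar A.s ry.reverse → u ≤ v := by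
  induction h with
  | nil =>
    intro u v hu hv
    simp [δStar, List.reverse_nil] at hu
    exact hu ▸ A.s_min v
  | @cons a t₁ t₂ h ih =>
    intro u v hu hv
    rw [List.reverse_cons, mem_δStar_snoc] at hu hv
    obtain ⟨u', hu', hu⟩ := hu
    obtain ⟨v', hv', hv⟩ := hv
    rcases lt_or_eq_of_le (ih u' v' hu' hv') with h' | h'
    · exact A.wheeler_ii hu hv h'
    · subst h'
      exact le_of_eq (hdet u' a hu hv)
  | @rel a b t₁ t₂ hab =>
    intro u v hu hv
    rw [List.reverse_cons, mem_δStar_snoc] at hu hv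
    obtain ⟨u', hu', hu⟩ := hu
    obtain ⟨v', hv', hv⟩ := hv
    exact le_of_lt (A.wheeler_i hu hv hab)

end WNFA

/-- For a Wheeler DFA (a Wheeler NFA whose transition sets are subsingletons, with a
finite state set): reading co-lexicographically smaller strings leads to smaller-or-equal
states, strictly smaller states come from strictly smaller strings, and along any
monotone sequence of readable strings the reached states are eventually constant. -/
theorem wdfa_monotone_states {α Q : Type*} [LinearOrder α] [LinearOrder Q] [Fintype Q]
    (A : WNFA α Q) (hdet : ∀ (q : Q) (a : α), (A.δ q a).Subsingleton) :
    (∀ x y : List α, x ∈ A.Pref → y ∈ A.Pref →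
      ∀ u v : Q, u ∈ A.δStar A.s x → v ∈ A.δStar A.s y →
        (StrColex x y → u ≤ v) ∧ (u < v → StrColex x y)) ∧
    (∀ f : ℕ → List α, (∀ i, f i ∈ A.Pref) →
      ((∀ i, StrColex (f i) (f (i + 1)) ∨ f i = f (i + 1)) ∨
       (∀ i, StrColex (f (i + 1)) (f i) ∨ f (i + 1) = f i)) →
      ∃ n : ℕ, ∀ h k : ℕ, n ≤ h → n ≤ k →
        A.δStar A.s (f h) = A.δStar A.s (f k)) := by
  have key : ∀ x y : List α, ∀ u v : Q, u ∈ A.δStar A.s x → v ∈ A.δStar A.s y →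
      StrColex x y → u ≤ v := by
    intro x y u v hu hv h
    exact A.wheeler_key hdet h u v (by simpa using hu) (by simpa using hv)
  have first : ∀ x y : List α, x ∈ A.Pref → y ∈ A.Pref →
      ∀ u v : Q, u ∈ A.δStar A.s x → v ∈ A.δStar A.s y →
        (StrColex x y → u ≤ v) ∧ (u < v → StrColex x y) := by
    intro x y _ _ u v hu hv
    refine ⟨key x y u v hu hv, fun huv => ?_⟩
    haveI := List.Lex.trichotomous (α := α) (· < ·)
    rcases trichotomous_of (List.Lex (· < ·)) x.reverse y.reverse with h | h | h
    · exact h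
    · exact absurd (A.δStar_subsingleton hdet x A.s hu
        (by rw [List.reverse_injective h]; exact hv)) (ne_of_lt huv)
    · exact absurd (key y x v u hv hu h) (not_le.mpr huv)
  refine ⟨first, ?_⟩
  intro f hf hmono
  choose g hg using fun i => A.pref_nonempty (hf i)
  have hset : ∀ i, A.δStar A.s (f i) = {g i} := fun i =>
    ((A.δStar_subsingleton hdet (f i) A.s).eq_singleton_of_mem (hg i)).symm ▸ rfl
  have heq : ∀ i j, f i = f j → g i = g j := by
    intro i j h
    exact A.δStar_subsingleton hdet (f i) A.s (hg i) (h ▸ hg j)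
  rcases hmono with hm | hm
  · have gmono : Monotone g := monotone_nat_of_le_succ fun i => by
      rcases hm i with h | h
      · exact key (f i) (f (i+1)) _ _ (hg i) (hg (i+1)) h
      · exact (heq i (i+1) h).le
    obtain ⟨a, ⟨n, rfl⟩, hmax⟩ := Set.Finite.exists_maximalFor id _ (Set.range g).toFinite (Set.range_nonempty g)
    refine ⟨n, fun h k hh hk => ?_⟩
    have H : ∀ m, n ≤ m → g m = g n := fun m hm' =>
      le_antisymm (hmax ⟨m, rfl⟩ (gmono hm')) (gmono hm')
    rw [hset h, hset k, H h hh, H k hk]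
  · have gmono : Antitone g := antitone_nat_of_succ_le fun i => by
      rcases hm i with h | h
      · exact key (f (i+1)) (f i) _ _ (hg (i+1)) (hg i) h
      · exact (heq (i+1) i h).le
    obtain ⟨a, ⟨n, rfl⟩, hmin⟩ := Set.Finite.exists_minimalFor id _ (Set.range g).toFinite (Set.range_nonempty g)
    refine ⟨n, fun h k hh hk => ?_⟩
    have H : ∀ m, n ≤ m → g m = g n := fun m hm' =>
      le_antisymm (gmono hm') (hmin ⟨m, rfl⟩ (gmono hm'))
    rw [hset h, hset k, H h hh, H k hk]
end

section
/- Over a one-letter alphabet Σ = {a}, a regular language L ⊆ {a}* is Wheeler if and only if L is finite or co-finite. -/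
/-- Weak co-lexicographic order. -/
def ColexLE {α : Type*} [LinearOrder α] (x y : List α) : Prop :=
  StrColex x y ∨ x = y

/-- A sequence of strings is monotone (weakly increasing or weakly decreasing)
with respect to the co-lexicographic order. -/
def MonoColex {α : Type*} [LinearOrder α] (f : ℕ → List α) : Prop :=
  (∀ i, ColexLE (f i) (f (i + 1))) ∨ (∀ i, ColexLE (f (i + 1)) (f i))

/-- The set of prefixes of words of `L`. -/
def PrefL {α : Type*} (L : Set (List α)) : Set (List α) := {x | ∃ y, x ++ y ∈ L}

/-- The Myhill–Nerode right congruence `≡_L`. -/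
def EqL {α : Type*} (L : Set (List α)) (x y : List α) : Prop :=
  ∀ z, x ++ z ∈ L ↔ y ++ z ∈ L

/-- The sequence characterization of Wheeler languages: every monotone sequence in
`(Pref(L), ≺)` is eventually constant modulo `≡_L`. -/
def WheelerLike {α : Type*} [LinearOrder α] (L : Set (List α)) : Prop :=
  ∀ f : ℕ → List α, (∀ i, f i ∈ PrefL L) → MonoColex f →
    ∃ n : ℕ, ∀ h k : ℕ, n ≤ h → n ≤ k → EqL L (f h) (f k)


lemma unit_eq_rep (x : List Unit) : x = List.replicate x.length () :=
  List.eq_replicate_length.mpr (fun _ _ => rfl)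

lemma lex_rep (m n : ℕ) :
    List.Lex (· < ·) (List.replicate m ()) (List.replicate n ()) ↔ m < n := by
  induction m generalizing n with
  | zero =>
    cases n with
    | zero => simp
    | succ n => simp [List.replicate_succ]
  | succ m ih =>
    cases n with
    | zero => simp [List.replicate_succ]
    | succ n =>
      rw [List.replicate_succ, List.replicate_succ]
      constructor
      · intro h
        cases h with
        | cons h => exact Nat.succ_lt_succ ((ih n).1 h)
        | rel h => exact absurd h (by simp)
      · intro h
        exact List.Lex.cons ((ih n).2 (Nat.lt_of_succ_lt_succ h))

lemma colex_iff (x y : List Unit) : StrColex x y ↔ x.length < y.length := by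
  have hx := unit_eq_rep x.reverse
  have hy := unit_eq_rep y.reverse
  rw [List.length_reverse] at hx hy
  unfold StrColex
  rw [hx, hy]
  exact lex_rep _ _

lemma mono_bdd_const (g : ℕ → ℕ) (hm : ∀ i, g i ≤ g (i + 1)) (B : ℕ)
    (hb : ∀ i, g i ≤ B) : ∃ n, ∀ k, n ≤ k → g k = g n := by
  have hmono : Monotone g := monotone_nat_of_le_succ hm
  have hbdd : BddAbove (Set.range g) := ⟨B, by rintro _ ⟨i, rfl⟩; exact hb i⟩
  obtain ⟨n, hn⟩ := Nat.sSup_mem (Set.range_nonempty g) hbdd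
  exact ⟨n, fun k hk => le_antisymm (hn ▸ le_csSup hbdd ⟨k, rfl⟩) (hmono hk)⟩

lemma anti_const (g : ℕ → ℕ) (hm : ∀ i, g (i + 1) ≤ g i) :
    ∃ n, ∀ k, n ≤ k → g k = g n := by
  have hanti : Antitone g := antitone_nat_of_succ_le hm
  obtain ⟨n, hn⟩ := Nat.sInf_mem (Set.range_nonempty g)
  exact ⟨n, fun k hk => le_antisymm (hanti hk) (hn ▸ Nat.sInf_le ⟨k, rfl⟩)⟩


/-- The set of lengths of words of `L` (over the unary alphabet). -/
def SL (L : Set (List Unit)) : Set ℕ := {n | List.replicate n () ∈ L}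

lemma mem_iff_len (L : Set (List Unit)) (x : List Unit) : x ∈ L ↔ x.length ∈ SL L := by
  constructor
  · intro h
    show List.replicate x.length () ∈ L
    rwa [← unit_eq_rep]
  · intro h
    rw [unit_eq_rep x]
    exact h

lemma unary_regular_periodic (L : Set (List Unit))
    (hreg : ∃ (σ : Type) (_ : Fintype σ) (M : DFA Unit σ), M.accepts = L) :
    ∃ i t : ℕ, 0 < t ∧
      ∀ n, i ≤ n → (List.replicate (n + t) () ∈ L ↔ List.replicate n () ∈ L) := by
  obtain ⟨σ, instF, M, hML⟩ := hreg
  haveI := instF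
  have heval : ∀ (n : ℕ) (q : σ),
      M.evalFrom q (List.replicate n ()) = (fun q => M.step q ())^[n] q := by
    intro n
    induction n with
    | zero => intro q; rfl
    | succ n ih =>
      intro q
      rw [List.replicate_succ, Function.iterate_succ_apply]
      exact ih (M.step q ())
  have hmem : ∀ n : ℕ,
      (List.replicate n () ∈ L ↔ (fun q => M.step q ())^[n] M.start ∈ M.accept) := by
    intro n
    rw [← hML]; change M.evalFrom M.start (List.replicate n ()) ∈ M.accept ↔ _
    exact (heval n M.start) ▸ Iff.rfl
  obtain ⟨a, b, hab, heq⟩ := Finite.exists_ne_map_eq_of_infinite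
      (fun n : ℕ => (fun q => M.step q ())^[n] M.start)
  obtain ⟨i, j, hij, hpij⟩ : ∃ i j : ℕ, i < j ∧
      (fun q => M.step q ())^[i] M.start = (fun q => M.step q ())^[j] M.start := by
    rcases hab.lt_or_gt with hlt | hlt
    · exact ⟨a, b, hlt, heq⟩
    · exact ⟨b, a, hlt, heq.symm⟩
  refine ⟨i, j - i, by omega, fun n hn => ?_⟩
  rw [hmem, hmem]
  have h1 : n + (j - i) = (n - i) + j := by omega
  have h2 : n = (n - i) + i := by omega
  rw [h1]
  conv_rhs => rw [h2]
  rw [Function.iterate_add_apply, Function.iterate_add_apply, hpij]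

/-- Over the one-letter alphabet, a regular language is Wheeler iff it is
finite or co-finite. -/
theorem unary_wheeler_iff_finite_or_cofinite (L : Set (List Unit))
    (hreg : ∃ (σ : Type) (_ : Fintype σ) (M : DFA Unit σ), M.accepts = L) :
    WheelerLike L ↔ L.Finite ∨ (Lᶜ : Set (List Unit)).Finite := by
  constructor
  · -- Wheeler implies finite or co-finite
    intro hW
    by_contra hcon
    rw [not_or] at hcon
    obtain ⟨hLfin, hLcfin⟩ := hcon
    have hSinf : (SL L).Infinite := by
      intro hfin
      exact hLfin ((hfin.image (fun n => List.replicate n ())).subset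
        (fun x hx => ⟨x.length, (mem_iff_len L x).1 hx, (unit_eq_rep x).symm⟩))
    have hScinf : ((SL L)ᶜ).Infinite := by
      intro hfin
      refine hLcfin ((hfin.image (fun n => List.replicate n ())).subset ?_)
      intro x hx
      exact ⟨x.length, fun hm => hx ((mem_iff_len L x).2 hm), (unit_eq_rep x).symm⟩
    obtain ⟨i, t, ht, hper⟩ := unary_regular_periodic L hreg
    have hperk : ∀ (k n : ℕ), i ≤ n →
        (List.replicate (n + k * t) () ∈ L ↔ List.replicate n () ∈ L) := by
      intro k
      induction k with
      | zero => intro n _; simp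
      | succ k ih =>
        intro n hn
        have he : n + (k + 1) * t = (n + k * t) + t := by ring
        rw [he, hper _ (by omega)]
        exact ih n hn
    obtain ⟨s, hsS, hsi⟩ := hSinf.exists_gt i
    obtain ⟨u, huS, hus⟩ := hScinf.exists_gt s
    set T : ℕ := (u - s + 1) * t with hTdef
    have hstepT : ∀ (k n : ℕ), i ≤ n →
        (List.replicate (n + k * T) () ∈ L ↔ List.replicate n () ∈ L) := by
      intro k n hn
      have he : n + k * T = n + (k * (u - s + 1)) * t := by rw [hTdef]; ring
      simp [he]
      exact hperk _ n hn
    have hT : u - s < T := by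
      have h1 : u - s + 1 ≤ (u - s + 1) * t := Nat.le_mul_of_pos_right _ ht
      omega
    have huT : u < s + T := by omega
    set g : ℕ → ℕ := fun m => (if m % 2 = 0 then s else u) + (m / 2) * T with hgdef
    have hgeven : ∀ k, g (2 * k) = s + k * T := by
      intro k
      have h1 : (2 * k) % 2 = 0 := by omega
      have h2 : (2 * k) / 2 = k := by omega
      simp [hgdef, h1, h2]
    have hgodd : ∀ k, g (2 * k + 1) = u + k * T := by
      intro k
      have h1 : (2 * k + 1) % 2 = 1 := by omega
      have h2 : (2 * k + 1) / 2 = k := by omega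
      simp [hgdef, h1, h2]
    have hglt : ∀ m, g m < g (m + 1) := by
      intro m
      rcases Nat.even_or_odd m with ⟨k, hk⟩ | ⟨k, hk⟩
      · have hm : m = 2 * k := by omega
        have hm1 : m + 1 = 2 * k + 1 := by omega
        rw [hm, hgeven, hgodd]
        exact Nat.add_lt_add_right hus _
      · have hm : m = 2 * k + 1 := by omega
        have hm1 : m + 1 = 2 * (k + 1) := by omega
        rw [hm]
        have hm2 : 2 * k + 1 + 1 = 2 * (k + 1) := by ring
        rw [hm2, hgodd, hgeven]
        have he : s + (k + 1) * T = (s + T) + k * T := by ring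
        simp [he]
        exact huT
    have hgmono : StrictMono g := strictMono_nat_of_lt_succ hglt
    have hmem2 : ∀ k, List.replicate (g (2 * k)) () ∈ L := by
      intro k
      rw [hgeven]
      exact (hstepT k s (le_of_lt hsi)).2 hsS
    have hmem3 : ∀ k, List.replicate (g (2 * k + 1)) () ∉ L := by
      intro k
      rw [hgodd]
      intro h
      exact huS ((hstepT k u (by omega)).1 h)
    have hprefs : ∀ m, List.replicate (g m) () ∈ PrefL L := by
      intro m
      refine ⟨List.replicate (g (2 * (m + 1)) - g m) (), ?_⟩
      rw [← List.replicate_add]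
      have hle : g m < g (2 * (m + 1)) := hgmono (by omega)
      have he : g m + (g (2 * (m + 1)) - g m) = g (2 * (m + 1)) := by omega
      simp [he]
      exact hmem2 (m + 1)
    have hmonoc : MonoColex (fun m => List.replicate (g m) ()) := by
      left
      intro m
      left
      rw [colex_iff]
      simpa using hglt m
    obtain ⟨n, hn⟩ := hW (fun m => List.replicate (g m) ()) hprefs hmonoc
    have hEq := hn (2 * n) (2 * n + 1) (by omega) (by omega) []
    simp only [List.append_nil] at hEq
    exact hmem3 n (hEq.1 (hmem2 n))
  · -- finite or co-finite implies Wheeler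
    rintro (hfin | hcof) f hpref hmono
    · -- L finite
      by_cases hLe : L = ∅
      · exfalso
        obtain ⟨y, hy⟩ := hpref 0
        rw [hLe] at hy
        exact hy
      obtain ⟨w, hw⟩ := Set.nonempty_iff_ne_empty.mpr hLe
      have hSfin : (SL L).Finite := by
        refine (hfin.image List.length).subset ?_
        intro n hn
        exact ⟨List.replicate n (), hn, by simp⟩
      obtain ⟨B, hB⟩ := hSfin.bddAbove
      have hlen : ∀ i, (f i).length ≤ B := by
        intro i
        obtain ⟨y, hy⟩ := hpref i
        have h1 := hB ((mem_iff_len L _).1 hy)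
        simp only [List.length_append] at h1
        omega
      have hconst : ∃ n, ∀ k, n ≤ k → (f k).length = (f n).length := by
        rcases hmono with h | h
        · refine mono_bdd_const (fun i => (f i).length) (fun i => ?_) B hlen
          rcases h i with hc | he
          · exact le_of_lt ((colex_iff _ _).1 hc)
          · simp [he]
        · refine anti_const (fun i => (f i).length) (fun i => ?_)
          rcases h i with hc | he
          · exact le_of_lt ((colex_iff _ _).1 hc)
          · simp [he]
      obtain ⟨n, hn⟩ := hconst
      refine ⟨n, fun h k hh hk => ?_⟩
      have hfk : f h = f k := by
        rw [unit_eq_rep (f h), unit_eq_rep (f k), hn h hh, hn k hk]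
      rw [hfk]
      exact fun z => Iff.rfl
    · -- L co-finite
      have hSc : ((SL L)ᶜ).Finite := by
        refine (hcof.image List.length).subset ?_
        intro n hn
        exact ⟨List.replicate n (), fun h => hn h, by simp⟩
      obtain ⟨N, hN⟩ : ∃ N, ∀ n, N ≤ n → n ∈ SL L := by
        rcases hSc.bddAbove with ⟨B, hB⟩
        refine ⟨B + 1, fun n hn => ?_⟩
        by_contra hc
        have := hB hc
        omega
      have hbig : ∀ x y : List Unit, N ≤ x.length → N ≤ y.length → EqL L x y := by
        intro x y hx hy z
        have h1 : x ++ z ∈ L := (mem_iff_len L _).2 (hN _ (by simp; omega))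
        have h2 : y ++ z ∈ L := (mem_iff_len L _).2 (hN _ (by simp; omega))
        exact iff_of_true h1 h2
      rcases hmono with h | h
      · have hmle : ∀ i, (f i).length ≤ (f (i + 1)).length := by
          intro i
          rcases h i with hc | he
          · exact le_of_lt ((colex_iff _ _).1 hc)
          · simp [he]
        have hmono' : Monotone (fun i => (f i).length) := monotone_nat_of_le_succ hmle
        by_cases hbound : ∀ i, (f i).length < N
        · obtain ⟨n, hn⟩ := mono_bdd_const (fun i => (f i).length) hmle N (fun i => le_of_lt (hbound i))
          refine ⟨n, fun h' k hh hk => ?_⟩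
          have hfk : f h' = f k := by
            rw [unit_eq_rep (f h'), unit_eq_rep (f k), hn h' hh, hn k hk]
          rw [hfk]
          exact fun z => Iff.rfl
        · push_neg at hbound
          obtain ⟨i0, hi0⟩ := hbound
          refine ⟨i0, fun h' k hh hk => hbig _ _ ?_ ?_⟩
          · exact le_trans hi0 (hmono' hh)
          · exact le_trans hi0 (hmono' hk)
      · have hmle : ∀ i, (f (i + 1)).length ≤ (f i).length := by
          intro i
          rcases h i with hc | he
          · exact le_of_lt ((colex_iff _ _).1 hc)
          · simp [he]
        obtain ⟨n, hn⟩ := anti_const (fun i => (f i).length) hmle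
        refine ⟨n, fun h' k hh hk => ?_⟩
        have hfk : f h' = f k := by
          rw [unit_eq_rep (f h'), unit_eq_rep (f k), hn h' hh, hn k hk]
        rw [hfk]
        exact fun z => Iff.rfl
end

section
/- The language {a^{2i+1} : i ≥ 0} of odd-length strings over the unary alphabet {a} is not Wheeler. -/
lemma lex_replicate (i : ℕ) :
    List.Lex (fun a b : Unit => a < b) (List.replicate i ()) (List.replicate (i+1) ()) := by
  induction i with
  | zero => exact List.Lex.nil
  | succ n ih => exact List.Lex.cons ih

/-- The unary language of odd-length strings `{a^(2i+1) : i ≥ 0}` is not Wheeler. -/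
theorem odd_unary_not_wheeler :
    ¬ WheelerLike {w : List Unit | Odd w.length} := by
  intro W
  obtain ⟨n, hn⟩ := W (fun i => List.replicate i ())
    (fun i => ⟨List.replicate (i+1) (), by
      simp [PrefL, ← List.replicate_add]⟩)
    (Or.inl (fun i => Or.inl (by
      simpa [StrColex, List.reverse_replicate] using lex_replicate i)))
  have := hn n (n+1) le_rfl (by omega) (List.replicate (n+1) ())
  simp [EqL, ← List.replicate_add, Nat.odd_iff] at this
  omega
end

section
/- The intersection of two Wheeler languages is Wheeler: if L₁ and L₂ satisfy that every monotone sequence in (Pref(Lᵢ), ≺) is eventually constant modulo ≡_{Lᵢ}, then every monotone sequence in (Pref(L₁ ∩ L₂), ≺) is eventually constant modulo ≡_{L₁ ∩ L₂}. -/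
/-- The intersection of two Wheeler languages is Wheeler. -/
theorem wheeler_inter {α : Type*} [Fintype α] [LinearOrder α]
    (L₁ L₂ : Set (List α)) (h₁ : WheelerLike L₁) (h₂ : WheelerLike L₂) :
    WheelerLike (L₁ ∩ L₂) := by
  intro f hf hmono
  have hf₁ : ∀ i, f i ∈ PrefL L₁ := fun i => (hf i).imp fun y hy => hy.1
  have hf₂ : ∀ i, f i ∈ PrefL L₂ := fun i => (hf i).imp fun y hy => hy.2
  obtain ⟨n₁, hn₁⟩ := h₁ f hf₁ hmono
  obtain ⟨n₂, hn₂⟩ := h₂ f hf₂ hmono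
  refine ⟨max n₁ n₂, fun h k hh hk z => ?_⟩
  have e1 := hn₁ h k (le_trans (le_max_left _ _) hh) (le_trans (le_max_left _ _) hk) z
  have e2 := hn₂ h k (le_trans (le_max_right _ _) hh) (le_trans (le_max_right _ _) hk) z
  exact ⟨fun hm => ⟨e1.mp hm.1, e2.mp hm.2⟩, fun hm => ⟨e1.mpr hm.1, e2.mpr hm.2⟩⟩
end

section
/- Let α₁, α, α₂ ∈ Σ* with α non-empty. If α is not primitive (i.e., α = β^k for some non-empty β and k > 1), then the language α₁ · α* · α₂ = {α₁ αⁿ α₂ : n ≥ 0} is not Wheeler. -/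
/-- `w^n`: the `n`-th power of a word. -/
def wordPow {α : Type*} (w : List α) : ℕ → List α
  | 0 => []
  | n + 1 => w ++ wordPow w n

lemma wordPow_add {α : Type*} (w : List α) (m n : ℕ) :
    wordPow w (m + n) = wordPow w m ++ wordPow w n := by
  induction m with
  | zero => simp [wordPow]
  | succ m ih =>
      have : m + 1 + n = (m + n) + 1 := by omega
      rw [this, wordPow, ih, wordPow, List.append_assoc]

lemma wordPow_comm {α : Type*} (w : List α) (n : ℕ) :
    wordPow w n ++ w = w ++ wordPow w n := by
  have h1 := wordPow_add w n 1
  have h2 := wordPow_add w 1 n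
  simp [wordPow] at h1 h2
  rw [← h1, ← h2]

lemma wordPow_length {α : Type*} (w : List α) (n : ℕ) :
    (wordPow w n).length = n * w.length := by
  induction n with
  | zero => simp [wordPow]
  | succ n ih => simp [wordPow, ih]; ring

lemma wordPow_inj {α : Type*} {w : List α} (hw : w ≠ []) {m n : ℕ}
    (h : wordPow w m = wordPow w n) : m = n := by
  have := congrArg List.length h
  rw [wordPow_length, wordPow_length] at this
  have hl : 0 < w.length := List.length_pos_iff.mpr hw
  exact Nat.eq_of_mul_eq_mul_right hl this

lemma wordPow_reverse {α : Type*} (w : List α) (n : ℕ) :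
    (wordPow w n).reverse = wordPow w.reverse n := by
  induction n with
  | zero => simp [wordPow]
  | succ n ih => rw [wordPow, List.reverse_append, ih, wordPow_comm, wordPow]

lemma wordPow_pow {α : Type*} (b : List α) (k n : ℕ) :
    wordPow (wordPow b k) n = wordPow b (k * n) := by
  induction n with
  | zero => simp [wordPow]
  | succ n ih =>
      rw [wordPow, ih, ← wordPow_add]
      congr 1; ring

lemma lex_append_left_iff {α : Type*} [LinearOrder α] (u x y : List α) :
    List.Lex (· < ·) (u ++ x) (u ++ y) ↔ List.Lex (· < ·) x y := by
  induction u with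
  | nil => simp
  | cons a u ih => simpa [List.lex_cons_iff] using ih

/-- If `a` is a non-empty word that is not primitive (i.e. `a = b^k` for some non-empty
`b` and `k > 1`), then the language `α₁ · a* · α₂` is not Wheeler. -/
theorem not_wheeler_of_not_primitive {α : Type*} [Fintype α] [LinearOrder α]
    (w₁ a w₂ : List α) (ha : a ≠ [])
    (hnp : ∃ (b : List α) (k : ℕ), b ≠ [] ∧ 1 < k ∧ a = wordPow b k) :
    ¬ WheelerLike {w : List α | ∃ n : ℕ, w = w₁ ++ wordPow a n ++ w₂} := by
  obtain ⟨b, k, hb, hk, hab⟩ := hnp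
  set L : Set (List α) := {w : List α | ∃ n : ℕ, w = w₁ ++ wordPow a n ++ w₂} with hL
  intro hW
  set f : ℕ → List α := fun i => w₁ ++ wordPow b i with hf
  -- prefixes
  have hpref : ∀ i, f i ∈ PrefL L := by
    intro i
    refine ⟨wordPow b (k * i - i) ++ w₂, ⟨i, ?_⟩⟩
    have hle : i ≤ k * i := Nat.le_mul_of_pos_left i (by omega)
    have : wordPow b i ++ wordPow b (k * i - i) = wordPow b (k * i) := by
      rw [← wordPow_add]; congr 1; omega
    rw [hab, wordPow_pow]
    simp only [hf, List.append_assoc, ← this]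
  -- monotone
  have hmono : MonoColex f := by
    set c := b.reverse with hc
    set s := w₁.reverse with hs
    have hrev : ∀ i, (f i).reverse = wordPow c i ++ s := by
      intro i
      simp [hf, List.reverse_append, wordPow_reverse, hc, hs]
    have hrevsucc : ∀ i, (f (i + 1)).reverse = wordPow c i ++ (c ++ s) := by
      intro i
      rw [hrev (i + 1)]
      rw [show wordPow c (i+1) = wordPow c i ++ c by
        have := wordPow_add c i 1; simpa [wordPow] using this]
      simp [List.append_assoc]
    rcases trichotomous_of (List.Lex (· < ·)) s (c ++ s) with h | h | h
    · left
      intro i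
      left
      show List.Lex (· < ·) (f i).reverse (f (i+1)).reverse
      rw [hrev, hrevsucc, lex_append_left_iff]
      exact h
    · exfalso
      have := congrArg List.length h
      simp [hc] at this
      exact hb this
    · right
      intro i
      left
      show List.Lex (· < ·) (f (i+1)).reverse (f i).reverse
      rw [hrevsucc, hrev, lex_append_left_iff]
      exact h
  obtain ⟨n, hn⟩ := hW f hpref hmono
  -- membership characterization
  have hmem : ∀ i, f i ++ w₂ ∈ L ↔ k ∣ i := by
    intro i
    constructor
    · rintro ⟨m, hm⟩
      simp only [hf, List.append_assoc] at hm
      have h1 := List.append_cancel_left hm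
      have h2 : wordPow b i = wordPow a m := List.append_cancel_right h1
      rw [hab, wordPow_pow] at h2
      exact ⟨m, wordPow_inj hb h2⟩
    · rintro ⟨m, rfl⟩
      refine ⟨m, ?_⟩
      rw [hab, wordPow_pow]
  have h1 := (hn (n * k) (n * k + 1) (Nat.le_mul_of_pos_right n (by omega))
    (le_trans (Nat.le_mul_of_pos_right n (by omega)) (Nat.le_succ _))) w₂
  rw [hmem, hmem] at h1
  have hd1 : k ∣ n * k := ⟨n, Nat.mul_comm n k⟩
  have hd2 : k ∣ n * k + 1 := h1.mp hd1
  have : k ∣ 1 := (Nat.dvd_add_right hd1).mp hd2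
  exact Nat.lt_irrefl 1 (lt_of_lt_of_le hk (Nat.le_of_dvd one_pos this))
end

section
/- For any two strings α₀ ⪯ α₁ in Σ⁺, the co-lexicographic open interval (α₀, α₁) = {β ∈ Σ* : α₀ ≺ β ≺ α₁} is a Wheeler language; in particular, the downward set (−∞, α₁) = {β : β ≺ α₁} equals Σ⁺·F ∪ {γ : γ ≺ α₁, |γ| ≤ |α₁|} where F = {β : β ≺ α₁, |β| = |α₁|}. -/
section Aux
variable {α : Type*} [LinearOrder α]

private lemma lex_iff_lt {u v : List α} : List.Lex (· < ·) u v ↔ u < v := Iff.rfl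

private lemma le_iff_lexle {u v : List α} : u ≤ v ↔ (List.Lex (· < ·) u v ∨ u = v) := by
  rw [le_iff_lt_or_eq]
  exact or_congr lex_iff_lt.symm Iff.rfl

private lemma colexle_iff {x y : List α} : ColexLE x y ↔ x.reverse ≤ y.reverse := by
  rw [le_iff_lexle]
  unfold ColexLE StrColex
  rw [List.reverse_inj]

private lemma lex_nil_of_ne {v : List α} (h : v ≠ []) : List.Lex (· < ·) [] v := by
  cases v with
  | nil => exact absurd rfl h
  | cons a l => exact List.Lex.nil

private lemma lex_cons_iff' {a b : α} {u v : List α} :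
    List.Lex (· < ·) (a :: u) (b :: v) ↔ a < b ∨ (a = b ∧ List.Lex (· < ·) u v) := by
  constructor
  · intro h
    cases h with
    | cons h => exact Or.inr ⟨rfl, h⟩
    | rel h => exact Or.inl h
  · rintro (h | ⟨rfl, h⟩)
    exacts [.rel h, .cons h]

private lemma lex_take (k : ℕ) {u v : List α} (h : List.Lex (· < ·) u v) :
    List.Lex (· < ·) (u.take k) (v.take k) ∨ u.take k = v.take k := by
  induction h generalizing k with
  | nil =>
    cases k with
    | zero => exact Or.inr rfl
    | succ k => exact Or.inl List.Lex.nil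
  | @cons a l₁ l₂ h ih =>
    cases k with
    | zero => exact Or.inr rfl
    | succ k =>
      rcases ih k with h' | h'
      · exact Or.inl (.cons h')
      · exact Or.inr (by simp [List.take_succ_cons, h'])
  | rel h =>
    cases k with
    | zero => exact Or.inr rfl
    | succ k => exact Or.inl (.rel h)

private lemma take_le_take (k : ℕ) {u v : List α} (h : u ≤ v) : u.take k ≤ v.take k := by
  rcases le_iff_lexle.mp h with h | rfl
  · exact le_iff_lexle.mpr (lex_take k h)
  · exact le_rfl

private lemma lex_append_left_cancel :
    ∀ (s u v : List α), List.Lex (· < ·) (s ++ u) (s ++ v) → List.Lex (· < ·) u v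
  | [], _, _, h => h
  | _ :: s, u, v, h => lex_append_left_cancel s u v (((lex_cons_iff'.mp h).resolve_left (lt_irrefl _)).2)

private lemma append_left_le_cancel {s u v : List α} (h : s ++ u ≤ s ++ v) : u ≤ v := by
  rcases le_iff_lexle.mp h with h | h
  · exact le_iff_lexle.mpr (Or.inl (lex_append_left_cancel s u v h))
  · exact le_of_eq (List.append_cancel_left h)

private lemma lex_append_of_lex {s A : List α} (h : List.Lex (· < ·) s A)
    (hl : A.length ≤ s.length) (t : List α) : List.Lex (· < ·) (s ++ t) A := by
  induction A generalizing s with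
  | nil => exact absurd h List.not_lex_nil
  | cons a A ih =>
    cases s with
    | nil => simp at hl
    | cons b s =>
      rcases lex_cons_iff'.mp h with h' | ⟨rfl, h'⟩
      · exact .rel h'
      · exact .cons (ih h' (by simpa using hl))

private lemma lex_of_append_lex {s A t : List α} (h : List.Lex (· < ·) (s ++ t) A)
    (hl : A.length ≤ s.length) : List.Lex (· < ·) s A := by
  induction A generalizing s with
  | nil => exact absurd h List.not_lex_nil
  | cons a A ih =>
    cases s with
    | nil => simp at hl
    | cons b s =>
      rcases lex_cons_iff'.mp h with h' | ⟨rfl, h'⟩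
      · exact .rel h'
      · exact .cons (ih h' (by simpa using hl))

private lemma lex_ext (A : List α) : ∀ (u v : List α), u.take A.length = v.take A.length →
    A.length < u.length → A.length < v.length →
    ((List.Lex (· < ·) A u ↔ List.Lex (· < ·) A v) ∧
     (List.Lex (· < ·) u A ↔ List.Lex (· < ·) v A)) := by
  induction A with
  | nil =>
    intro u v _ hu hv
    constructor
    · constructor <;> intro _
      · exact lex_nil_of_ne (by intro h; simp [h] at hv)
      · exact lex_nil_of_ne (by intro h; simp [h] at hu)
    · simp
  | cons a A ih =>
    intro u v ht hu hv
    cases u with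
    | nil => simp at hu
    | cons b u' =>
      cases v with
      | nil => simp at hv
      | cons c v' =>
        simp only [List.length_cons, List.take_succ_cons] at ht
        obtain ⟨hbc, ht'⟩ := List.cons_eq_cons.mp ht
        subst hbc
        obtain ⟨ih1, ih2⟩ := ih u' v' ht' (by simpa using hu) (by simpa using hv)
        constructor
        · rw [lex_cons_iff', lex_cons_iff']
          exact or_congr Iff.rfl (and_congr Iff.rfl ih1)
        · rw [lex_cons_iff', lex_cons_iff']
          exact or_congr Iff.rfl (and_congr Iff.rfl ih2)

end Aux

section Aux2
variable {α : Type*} [LinearOrder α]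

/-- Two sufficiently long strings with the same last `m` characters are
Nerode-equivalent for the interval language. -/
private lemma eql_of_sig (a₀ a₁ : List α) {x y : List α} (m : ℕ)
    (hm0 : a₀.length ≤ m) (hm1 : a₁.length ≤ m)
    (hx : m < x.length) (hy : m < y.length)
    (ht : x.reverse.take m = y.reverse.take m) :
    EqL {b : List α | StrColex a₀ b ∧ StrColex b a₁} x y := by
  have take_eq : ∀ k ≤ m, x.reverse.take k = y.reverse.take k := by
    intro k hk
    rw [← min_eq_left hk, ← List.take_take, ht, List.take_take, min_eq_left hk]
  intro z
  have key : ∀ a : List α, a.length ≤ m →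
      ((List.Lex (· < ·) a.reverse (x ++ z).reverse ↔
        List.Lex (· < ·) a.reverse (y ++ z).reverse) ∧
       (List.Lex (· < ·) (x ++ z).reverse a.reverse ↔
        List.Lex (· < ·) (y ++ z).reverse a.reverse)) := by
    intro a ha
    apply lex_ext
    · rw [List.reverse_append, List.reverse_append,
        List.take_append, List.take_append]
      congr 1
      exact take_eq _ (by simp; omega)
    · simp only [List.length_reverse, List.length_append]; omega
    · simp only [List.length_reverse, List.length_append]; omega
  simp only [Set.mem_setOf_eq]
  unfold StrColex
  rw [(key a₀ hm0).1, (key a₁ hm1).2]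

private lemma event_const_of_mono {β : Type*} [Finite β] [LinearOrder (List β)]
    (g : ℕ → List β) (hmono : Monotone g ∨ Antitone g) (m : ℕ)
    (hlen : ∀ i, (g i).length ≤ m) : ∃ N, ∀ k, N ≤ k → g k = g N := by
  have hfin : (Set.range g).Finite :=
    (List.finite_length_le β m).subset (by rintro _ ⟨i, rfl⟩; exact hlen i)
  rcases hmono with hm | hm
  · obtain ⟨a, ⟨N, rfl⟩, hmax⟩ :=
      Set.Finite.exists_maximalFor id (Set.range g) hfin ⟨g 0, 0, rfl⟩
    exact ⟨N, fun k hk => le_antisymm (hmax ⟨k, rfl⟩ (hm hk)) (hm hk)⟩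
  · obtain ⟨a, ⟨N, rfl⟩, hmin⟩ :=
      Set.Finite.exists_minimalFor id (Set.range g) hfin ⟨g 0, 0, rfl⟩
    exact ⟨N, fun k hk => le_antisymm (hm hk) (hmin ⟨k, rfl⟩ (hm hk))⟩

end Aux2

/-- For non-empty words `a₀ ⪯ a₁`, the open co-lexicographic interval `(a₀, a₁)` is a
Wheeler language; moreover the downward set `(−∞, a₁)` decomposes as
`Σ⁺·F ∪ {γ : γ ≺ a₁, |γ| ≤ |a₁|}` where `F = {β : β ≺ a₁, |β| = |a₁|}`. -/
theorem interval_wheeler {α : Type*} [Fintype α] [LinearOrder α]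
    (a₀ a₁ : List α) (h₀ : a₀ ≠ []) (h₁ : a₁ ≠ []) (hle : ColexLE a₀ a₁) :
    WheelerLike {b : List α | StrColex a₀ b ∧ StrColex b a₁} ∧
    {b : List α | StrColex b a₁} =
      {w : List α | ∃ x f : List α, x ≠ [] ∧
          (StrColex f a₁ ∧ f.length = a₁.length) ∧ w = x ++ f} ∪
      {g : List α | StrColex g a₁ ∧ g.length ≤ a₁.length} := by
  constructor
  · -- Wheeler part
    intro f _ hmono
    set L : Set (List α) := {b : List α | StrColex a₀ b ∧ StrColex b a₁} with hL
    set m : ℕ := max a₀.length a₁.length with hm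
    set r : ℕ → List α := fun i => (f i).reverse with hr
    have hrm : Monotone r ∨ Antitone r := by
      rcases hmono with h | h
      · exact Or.inl (monotone_nat_of_le_succ fun i => colexle_iff.mp (h i))
      · exact Or.inr (antitone_nat_of_succ_le fun i => colexle_iff.mp (h i))
    set g : ℕ → List α := fun i => (r i).take m with hg
    have hgm : Monotone g ∨ Antitone g := by
      rcases hrm with h | h
      · exact Or.inl fun i j hij => take_le_take m (h hij)
      · exact Or.inr fun i j hij => take_le_take m (h hij)
    obtain ⟨N, hN⟩ := event_const_of_mono g hgm m (fun i => by
      simp [hg, List.length_take])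
    have elen : ∀ i, (g i).length = min m (r i).length := fun i => by
      rw [hg]; simp [List.length_take]
    have gdef : ∀ i, g i = (r i).take m := fun i => rfl
    by_cases hp : (g N).length < m
    · -- the whole reverse is eventually constant
      refine ⟨N, fun h k hh hk => ?_⟩
      have const : ∀ j, N ≤ j → f j = f N := by
        intro j hj
        have h1 : g j = g N := hN j hj
        have hl := congrArg List.length h1
        rw [elen j, elen N] at hl
        have hpN := hp
        rw [elen N] at hpN
        have h3 : (r N).length < m := by omega
        have h2 : (r j).length < m := by omega
        have : r j = r N := by
          have e1 : g j = r j := by rw [gdef j]; exact List.take_of_length_le h2.le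
          have e2 : g N = r N := by rw [gdef N]; exact List.take_of_length_le h3.le
          rw [← e1, ← e2, h1]
        exact List.reverse_inj.mp this
      intro z
      rw [const h hh, const k hk]
    · -- last m characters eventually constant, strings long
      push_neg at hp
      have hpm : (g N).length = m := le_antisymm (by rw [elen N]; omega) hp
      have hlenN : ∀ k, N ≤ k → m ≤ (r k).length := by
        intro k hk
        have := congrArg List.length (hN k hk)
        rw [elen k, elen N] at this
        have := hpm
        rw [elen N] at this
        omega
      set s : ℕ → List α := fun k => (r k).drop m with hs
      have hrk : ∀ k, N ≤ k → r k = (g N) ++ s k := by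
        intro k hk
        rw [← hN k hk]
        exact (List.take_append_drop m (r k)).symm
      -- s is monotone/antitone on [N, ∞); find K past which s is constantly [] or never []
      have key : ∃ K, N ≤ K ∧ ((∀ k, K ≤ k → s k = []) ∨ (∀ k, K ≤ k → s k ≠ [])) := by
        have hsle : ∀ i j, N ≤ i → i ≤ j → (Monotone r → s i ≤ s j) ∧ (Antitone r → s j ≤ s i) := by
          intro i j hNi hij
          constructor
          · intro hmr
            have := hmr hij
            rw [hrk i hNi, hrk j (le_trans hNi hij)] at this
            exact append_left_le_cancel this
          · intro hmr
            have := hmr hij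
            rw [hrk i hNi, hrk j (le_trans hNi hij)] at this
            exact append_left_le_cancel this
        rcases hrm with hmr | hmr
        · by_cases hE : ∃ K, N ≤ K ∧ s K ≠ []
          · obtain ⟨K, hNK, hK⟩ := hE
            refine ⟨K, hNK, Or.inr fun k hk hnil => hK ?_⟩
            have : s K ≤ s k := (hsle K k hNK hk).1 hmr
            rw [hnil] at this
            exact (le_iff_lexle.mp this).resolve_left List.not_lex_nil
          · push_neg at hE
            exact ⟨N, le_rfl, Or.inl fun k hk => hE k (le_trans le_rfl hk)⟩
        · by_cases hE : ∃ K, N ≤ K ∧ s K = []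
          · obtain ⟨K, hNK, hK⟩ := hE
            refine ⟨K, hNK, Or.inl fun k hk => ?_⟩
            have : s k ≤ s K := (hsle K k hNK hk).2 hmr
            rw [hK] at this
            exact (le_iff_lexle.mp this).resolve_left List.not_lex_nil
          · push_neg at hE
            exact ⟨N, le_rfl, Or.inr fun k hk => hE k hk⟩
      obtain ⟨K, hNK, hcase⟩ := key
      rcases hcase with hnil | hnnil
      · -- f constant beyond K
        refine ⟨K, fun h k hh hk => ?_⟩
        have const : ∀ j, K ≤ j → f j = (g N).reverse := by
          intro j hj
          have : r j = g N := by
            rw [hrk j (le_trans hNK hj), hnil j hj, List.append_nil]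
          rw [← this, hr]
          simp
        intro z
        rw [const h hh, const k hk]
      · -- all long with same last m characters: use the signature lemma
        refine ⟨K, fun h k hh hk => ?_⟩
        apply eql_of_sig a₀ a₁ m (le_max_left _ _) (le_max_right _ _)
        · -- m < (f h).length
          have h1 := hlenN h (le_trans hNK hh)
          have h2 := hnnil h hh
          have : r h = g N ++ s h := hrk h (le_trans hNK hh)
          have h3 : (r h).length = m + (s h).length := by
            rw [this]; simp [hpm]
          have h4 : 0 < (s h).length := List.length_pos_iff.mpr h2
          simp only [hr, List.length_reverse] at h3 ⊢
          omega
        · have h1 := hlenN k (le_trans hNK hk)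
          have h2 := hnnil k hk
          have : r k = g N ++ s k := hrk k (le_trans hNK hk)
          have h3 : (r k).length = m + (s k).length := by
            rw [this]; simp [hpm]
          have h4 : 0 < (s k).length := List.length_pos_iff.mpr h2
          simp only [hr, List.length_reverse] at h3 ⊢
          omega
        · -- equal takes
          have e1 : (f h).reverse.take m = g N := hN h (le_trans hNK hh)
          have e2 : (f k).reverse.take m = g N := hN k (le_trans hNK hk)
          rw [e1, e2]
  · -- decomposition of the down-set
    ext b
    simp only [Set.mem_setOf_eq, Set.mem_union]
    constructor
    · intro hb
      by_cases hlen : b.length ≤ a₁.length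
      · exact Or.inr ⟨hb, hlen⟩
      · push_neg at hlen
        refine Or.inl ⟨b.take (b.length - a₁.length), b.drop (b.length - a₁.length),
          ?_, ⟨?_, ?_⟩, (List.take_append_drop _ b).symm⟩
        · intro hx
          have := congrArg List.length hx
          simp only [List.length_take] at this
          simp at this
          omega
        · -- StrColex (drop part) a₁
          unfold StrColex at hb ⊢
          have hsplit : b.reverse =
              (b.drop (b.length - a₁.length)).reverse ++ (b.take (b.length - a₁.length)).reverse := by
            rw [← List.reverse_append, List.take_append_drop]
          rw [hsplit] at hb
          apply lex_of_append_lex hb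
          simp only [List.length_reverse, List.length_drop]
          omega
        · simp only [List.length_drop]
          omega
    · rintro (⟨x, w, hx, ⟨hw, hwlen⟩, rfl⟩ | ⟨hb, _⟩)
      · unfold StrColex at hw ⊢
        rw [List.reverse_append]
        exact lex_append_of_lex hw (by simp [hwlen]) _
      · exact hb
end
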